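/- Let γ : I → X be a path with finite length in a metric space X. Then the multiplicity function x ↦ m(γ,x) := #(γ^{-1}(x)) is Borel measurable and length(γ) = ∫_X m(γ,x) dH^1(x). In particular, m(γ,x) is finite for H^1-almost every x ∈ X. -/

import Mathlib

open MeasureTheory ENNReal Set

section Stmt15Aux

variable {X : Type*} [MetricSpace X] [MeasurableSpace X] [BorelSpace X]

lemma h1_singleton (x : X) : μH[1] ({x} : Set X) = 0 := by
  haveI := MeasureTheory.Measure.noAtoms_hausdorff X (d := 1) one_pos
  exact measure_singleton x

/-- For a preconnected set, the distance between two of its points bounds `μH[1]` from below. -/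
lemma edist_le_h1 {s : Set X} (hs : IsPreconnected s) {x y : X} (hx : x ∈ s) (hy : y ∈ s) :
    edist x y ≤ μH[1] s := by
  set f : X → ℝ := fun z => dist x z with hf
  have hL : LipschitzWith 1 f := LipschitzWith.dist_right x
  have h1 : μH[1] (f '' s) ≤ μH[1] s := by
    simpa using hL.hausdorffMeasure_image_le (s := s) (d := 1) one_pos.le
  have hconn : IsPreconnected (f '' s) := hs.image f (hL.continuous.continuousOn)
  have h2 : Icc (0:ℝ) (dist x y) ⊆ f '' s :=
    hconn.Icc_subset ⟨x, hx, dist_self x⟩ ⟨y, hy, rfl⟩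
  calc edist x y = volume (Icc (0:ℝ) (dist x y)) := by
        rw [Real.volume_Icc, sub_zero, edist_dist]
    _ = μH[1] (Icc (0:ℝ) (dist x y)) := by rw [MeasureTheory.hausdorffMeasure_real]
    _ ≤ μH[1] (f '' s) := measure_mono h2
    _ ≤ μH[1] s := h1

lemma h1_image_le {γ : ℝ → X} {c d : ℝ} (hcd : c ≤ d)
    (hfin : eVariationOn γ (Icc c d) ≠ ⊤) :
    μH[1] (γ '' Icc c d) ≤ eVariationOn γ (Icc c d) := by
  set s : Set ℝ := Icc c d with hs
  have hcs : c ∈ s := ⟨le_rfl, hcd⟩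
  have hbv : BoundedVariationOn γ s := hfin
  have hlbv : LocallyBoundedVariationOn γ s := hbv.locallyBoundedVariationOn
  set v : ℝ → ℝ := variationOnFromTo γ s c with hv
  -- distance bound from variation
  have key : ∀ t₁ ∈ s, ∀ t₂ ∈ s, edist (γ t₁) (γ t₂) ≤ ENNReal.ofReal (|v t₂ - v t₁|) := by
    have main : ∀ t₁ ∈ s, ∀ t₂ ∈ s, t₁ ≤ t₂ →
        edist (γ t₁) (γ t₂) ≤ ENNReal.ofReal (|v t₂ - v t₁|) := by
      intro t₁ h₁ t₂ h₂ h12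
      have hsub : v t₂ - v t₁ = variationOnFromTo γ s t₁ t₂ := by
        have := variationOnFromTo.add hlbv hcs h₁ h₂
        simp only [← hv] at this
        linarith
      have hval : variationOnFromTo γ s t₁ t₂ = (eVariationOn γ (s ∩ Icc t₁ t₂)).toReal :=
        variationOnFromTo.eq_of_le γ s h12
      have hfin' : eVariationOn γ (s ∩ Icc t₁ t₂) ≠ ⊤ :=
        fun h => hfin (top_le_iff.1 (h ▸ eVariationOn.mono γ inter_subset_left))
      have hedist : edist (γ t₁) (γ t₂) ≤ eVariationOn γ (s ∩ Icc t₁ t₂) :=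
        eVariationOn.edist_le γ ⟨h₁, le_rfl, h12⟩ ⟨h₂, h12, le_rfl⟩
      rw [hsub, hval, abs_of_nonneg ENNReal.toReal_nonneg,
        ENNReal.ofReal_toReal hfin']
      exact hedist
    intro t₁ h₁ t₂ h₂
    rcases le_total t₁ t₂ with h | h
    · exact main t₁ h₁ t₂ h₂ h
    · rw [edist_comm, abs_sub_comm]
      exact main t₂ h₂ t₁ h₁ h
  set f : ℝ → X := γ ∘ Function.invFunOn v s with hfdef
  have hinv : ∀ y ∈ v '' s, Function.invFunOn v s y ∈ s ∧ v (Function.invFunOn v s y) = y := by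
    rintro y ⟨t, ht, rfl⟩
    exact ⟨Function.invFunOn_mem ⟨t, ht, rfl⟩, Function.invFunOn_eq ⟨t, ht, rfl⟩⟩
  have hf : LipschitzOnWith 1 f (v '' s) := by
    intro y₁ hy₁ y₂ hy₂
    obtain ⟨m₁, e₁⟩ := hinv y₁ hy₁
    obtain ⟨m₂, e₂⟩ := hinv y₂ hy₂
    calc edist (f y₁) (f y₂) ≤ ENNReal.ofReal (|v (Function.invFunOn v s y₂) -
          v (Function.invFunOn v s y₁)|) := key _ m₁ _ m₂
      _ = edist y₁ y₂ := by rw [e₁, e₂, edist_dist, Real.dist_eq, abs_sub_comm]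
      _ ≤ 1 * edist y₁ y₂ := by rw [one_mul]
  have himg : γ '' s ⊆ f '' (v '' s) := by
    rintro _ ⟨t, ht, rfl⟩
    refine ⟨v t, ⟨t, ht, rfl⟩, ?_⟩
    obtain ⟨m, e⟩ := hinv (v t) ⟨t, ht, rfl⟩
    have : edist (γ (Function.invFunOn v s (v t))) (γ t) = 0 := by
      have := key _ m t ht
      rw [e] at this
      simpa using this
    have := edist_eq_zero.1 this
    simp [hfdef, Function.comp, this]
  have hvs : v '' s ⊆ Icc (0:ℝ) ((eVariationOn γ s).toReal) := by
    rintro _ ⟨t, ht, rfl⟩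
    constructor
    · exact variationOnFromTo.nonneg_of_le γ s ht.1
    · rw [show v t = variationOnFromTo γ s c t from rfl, variationOnFromTo.eq_of_le γ s ht.1]
      exact ENNReal.toReal_mono hfin (eVariationOn.mono γ inter_subset_left)
  have h3 : μH[1] (f '' (v '' s)) ≤ μH[1] (v '' s) := by
    simpa using hf.hausdorffMeasure_image_le (d := 1) one_pos.le
  calc μH[1] (γ '' s) ≤ μH[1] (f '' (v '' s)) := measure_mono himg
    _ ≤ μH[1] (v '' s) := h3
    _ ≤ μH[1] (Icc (0:ℝ) ((eVariationOn γ s).toReal)) := measure_mono hvs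
    _ = ENNReal.ofReal ((eVariationOn γ s).toReal) := by
        rw [MeasureTheory.hausdorffMeasure_real, Real.volume_Icc, sub_zero]
    _ = eVariationOn γ s := ENNReal.ofReal_toReal hfin

lemma pathMult_eq_count' {γ : ℝ → X} {a b : ℝ} (hγ : ContinuousOn γ (Icc a b)) (x : X) :
    (∑' _ : (γ ⁻¹' {x} ∩ Icc a b : Set ℝ), (1 : ℝ≥0∞))
      = Measure.count (γ ⁻¹' {x} ∩ Icc a b) := by
  have hcl : IsClosed (Icc a b ∩ γ ⁻¹' {x}) :=
    hγ.preimage_isClosed_of_isClosed isClosed_Icc isClosed_singleton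
  rw [inter_comm] at hcl
  rw [Measure.count_apply hcl.measurableSet]
  rw [ENNReal.tsum_one]
  rfl

/-- The key counting inequality: the number of intervals of a partition whose image contains `x`
is at most the number of preimages of `x` plus the number of partition points mapping to `x`. -/
lemma count_claim {γ : ℝ → X} (u : ℕ → ℝ) (hu : Monotone u) (x : X) :
    ∀ n, ∑ i ∈ Finset.range n, (γ '' Icc (u i) (u (i+1))).indicator 1 x
      ≤ Measure.count (γ ⁻¹' {x} ∩ Icc (u 0) (u n))
        + ∑ j ∈ Finset.range n, ({γ (u j)} : Set X).indicator 1 x := by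
  intro n
  induction n with
  | zero => simp
  | succ n ih =>
    rw [Finset.sum_range_succ, Finset.sum_range_succ]
    have hmono : Measure.count (γ ⁻¹' {x} ∩ Icc (u 0) (u n))
        ≤ Measure.count (γ ⁻¹' {x} ∩ Icc (u 0) (u (n+1))) :=
      measure_mono (inter_subset_inter_right _ (Icc_subset_Icc le_rfl (hu (Nat.le_succ n))))
    by_cases hxu : γ (u n) = x
    · have h1 : (γ '' Icc (u n) (u (n+1))).indicator (1 : X → ℝ≥0∞) x ≤ ({γ (u n)} : Set X).indicator 1 x := by
        by_cases h : x ∈ γ '' Icc (u n) (u (n+1))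
        · simp [indicator_of_mem h, hxu, indicator_of_mem]
        · simp [indicator_of_notMem h]
      calc _ ≤ (Measure.count (γ ⁻¹' {x} ∩ Icc (u 0) (u n))
            + ∑ j ∈ Finset.range n, ({γ (u j)} : Set X).indicator 1 x)
            + ({γ (u n)} : Set X).indicator 1 x := add_le_add ih h1
        _ ≤ _ := by
            rw [add_assoc]
            exact add_le_add hmono le_rfl
    · by_cases hx2 : x ∈ γ '' Icc (u n) (u (n+1))
      · obtain ⟨p, hp, hpx⟩ := hx2
        have hpn : u n < p := lt_of_le_of_ne hp.1 (fun h => hxu (h ▸ hpx))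
        have hkey : Measure.count (γ ⁻¹' {x} ∩ Icc (u 0) (u n)) + 1
            ≤ Measure.count (γ ⁻¹' {x} ∩ Icc (u 0) (u (n+1))) := by
          have hsub : (γ ⁻¹' {x} ∩ Icc (u 0) (u n)) ∪ {p}
              ⊆ γ ⁻¹' {x} ∩ Icc (u 0) (u (n+1)) := by
            rintro q (⟨hq1, hq2⟩ | hq)
            · exact ⟨hq1, hq2.1, hq2.2.trans (hu (Nat.le_succ n))⟩
            · rw [mem_singleton_iff] at hq
              subst hq
              exact ⟨hpx, (hu (Nat.zero_le n)).trans hpn.le, hp.2⟩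
          have hdisj : Disjoint (γ ⁻¹' {x} ∩ Icc (u 0) (u n)) ({p} : Set ℝ) := by
            rw [disjoint_singleton_right]
            exact fun h => absurd h.2.2 (not_le.2 hpn)
          calc Measure.count (γ ⁻¹' {x} ∩ Icc (u 0) (u n)) + 1
              = Measure.count (γ ⁻¹' {x} ∩ Icc (u 0) (u n)) + Measure.count ({p} : Set ℝ) := by
                rw [Measure.count_singleton]
            _ = Measure.count ((γ ⁻¹' {x} ∩ Icc (u 0) (u n)) ∪ {p}) :=
                (measure_union hdisj (measurableSet_singleton p)).symm
            _ ≤ _ := measure_mono hsub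
        have h1 : (γ '' Icc (u n) (u (n+1))).indicator (1 : X → ℝ≥0∞) x ≤ 1 := by
          by_cases h : x ∈ γ '' Icc (u n) (u (n+1)) <;> simp [h]
        calc _ ≤ (Measure.count (γ ⁻¹' {x} ∩ Icc (u 0) (u n))
              + ∑ j ∈ Finset.range n, ({γ (u j)} : Set X).indicator 1 x) + 1 := add_le_add ih h1
          _ = (Measure.count (γ ⁻¹' {x} ∩ Icc (u 0) (u n)) + 1)
              + ∑ j ∈ Finset.range n, ({γ (u j)} : Set X).indicator 1 x := by ring
          _ ≤ Measure.count (γ ⁻¹' {x} ∩ Icc (u 0) (u (n+1)))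
              + ∑ j ∈ Finset.range n, ({γ (u j)} : Set X).indicator 1 x := add_le_add hkey le_rfl
          _ ≤ _ := add_le_add le_rfl (le_add_of_nonneg_right (zero_le))
      · rw [indicator_of_notMem hx2, add_zero]
        exact ih.trans (add_le_add hmono (le_add_of_nonneg_right (zero_le)))

lemma measurableSet_image_Ico {γ : ℝ → X} {a b u v : ℝ} (hγ : ContinuousOn γ (Icc a b))
    (h : Icc u v ⊆ Icc a b) : MeasurableSet (γ '' Ico u v) := by
  rcases le_or_gt v u with huv | huv
  · rw [Ico_eq_empty (not_lt.2 huv), image_empty]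
    exact MeasurableSet.empty
  · have hIco : Ico u v = ⋃ m : ℕ, Icc u (v - (v - u) / (m + 1)) := by
      ext p
      simp only [mem_Ico, mem_iUnion, mem_Icc]
      constructor
      · rintro ⟨hp1, hp2⟩
        obtain ⟨m, hm⟩ := exists_nat_gt ((v - u) / (v - p))
        refine ⟨m, hp1, ?_⟩
        have hvp : 0 < v - p := by linarith
        have h1 : (v - u) / (v - p) < (m : ℝ) + 1 := by
          calc (v - u) / (v - p) < m := hm
            _ ≤ (m : ℝ) + 1 := by linarith
        have h2 : (v - u) / ((m : ℝ) + 1) < v - p := by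
          rw [div_lt_iff₀ (by positivity)] at h1 ⊢
          rw [mul_comm]
          linarith
        linarith
      · rintro ⟨m, hp1, hp2⟩
        have h0 : (0:ℝ) < (m : ℝ) + 1 := by positivity
        have h1 : 0 < (v - u) / ((m : ℝ) + 1) := div_pos (by linarith) h0
        exact ⟨hp1, by linarith⟩
    rw [hIco, image_iUnion]
    refine MeasurableSet.iUnion fun m => ?_
    have hsub : Icc u (v - (v - u) / (m + 1)) ⊆ Icc a b := by
      refine subset_trans (Icc_subset_Icc le_rfl ?_) h
      have h0 : (0:ℝ) < (m : ℝ) + 1 := by positivity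
      have h1 : 0 ≤ (v - u) / ((m : ℝ) + 1) := le_of_lt (div_pos (by linarith) h0)
      push_cast
      linarith
    exact (isCompact_Icc.image_of_continuousOn (hγ.mono hsub)).measurableSet

end Stmt15Aux

noncomputable section DyadicAux

/-- Dyadic partition points of `[a, b]`. -/
def dyT (a b : ℝ) (n k : ℕ) : ℝ := a + k * (b - a) / 2^n

lemma dyT_mono {a b : ℝ} (hab : a ≤ b) (n : ℕ) : Monotone (dyT a b n) := by
  intro k k' hk
  have hk' : (k:ℝ) ≤ (k':ℝ) := by exact_mod_cast hk
  have hba : (0:ℝ) ≤ b - a := by linarith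
  have h2n : (0:ℝ) < 2^n := by positivity
  unfold dyT
  gcongr

lemma dyT_zero (a b : ℝ) (n : ℕ) : dyT a b n 0 = a := by simp [dyT]

lemma dyT_last (a b : ℝ) (n : ℕ) : dyT a b n (2^n) = b := by
  have h2n : (0:ℝ) ≠ 2^n := by positivity
  simp only [dyT, Nat.cast_pow, Nat.cast_ofNat]
  rw [mul_div_cancel_left₀ _ h2n.symm]
  ring

lemma dyT_len (a b : ℝ) (n k : ℕ) : dyT a b n (k+1) - dyT a b n k = (b - a) / 2^n := by
  unfold dyT
  push_cast
  ring

lemma dyT_refine_left (a b : ℝ) (n k : ℕ) : dyT a b (n+1) (2*k) = dyT a b n k := by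
  unfold dyT
  have h2n : (2:ℝ)^n ≠ 0 := by positivity
  push_cast
  rw [pow_succ]
  field_simp

lemma dyT_refine_right (a b : ℝ) (n k : ℕ) : dyT a b (n+1) (2*k+2) = dyT a b n (k+1) := by
  unfold dyT
  have h2n : (2:ℝ)^n ≠ 0 := by positivity
  push_cast
  rw [pow_succ]
  field_simp

lemma dyT_subset {a b : ℝ} (hab : a ≤ b) {n k : ℕ} (hk : k < 2^n) :
    Icc (dyT a b n k) (dyT a b n (k+1)) ⊆ Icc a b := by
  refine Icc_subset_Icc ?_ ?_
  · conv_lhs => rw [← dyT_zero a b n]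
    exact dyT_mono hab n (Nat.zero_le k)
  · conv_rhs => rw [← dyT_last a b n]
    exact dyT_mono hab n hk

lemma mem_dyT {a b p : ℝ} (hp : p ∈ Ico a b) (n : ℕ) :
    ∃ k : ℕ, k < 2^n ∧ p ∈ Ico (dyT a b n k) (dyT a b n (k+1)) := by
  obtain ⟨hp1, hp2⟩ := hp
  have hab : 0 < b - a := by linarith
  have h2n : (0:ℝ) < 2^n := by positivity
  set r : ℝ := (p - a) * 2^n / (b - a) with hr
  have hr0 : 0 ≤ r := div_nonneg (mul_nonneg (by linarith) h2n.le) hab.le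
  refine ⟨⌊r⌋₊, ?_, ?_, ?_⟩
  · have hrlt : r < 2^n := by
      rw [hr, div_lt_iff₀ hab]
      have : p - a < b - a := by linarith
      calc (p - a) * 2^n < (b - a) * 2^n := mul_lt_mul_of_pos_right this h2n
        _ = 2^n * (b - a) := mul_comm _ _
    exact (Nat.floor_lt hr0).2 (by push_cast; exact hrlt)
  · have h1 : (⌊r⌋₊ : ℝ) ≤ r := Nat.floor_le hr0
    rw [hr, le_div_iff₀ hab] at h1
    unfold dyT
    rw [← sub_nonneg]
    have : (⌊r⌋₊ : ℝ) * (b - a) / 2^n ≤ p - a := by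
      rw [div_le_iff₀ h2n]
      nlinarith
    linarith
  · have h2 : r < (⌊r⌋₊ : ℝ) + 1 := Nat.lt_floor_add_one r
    rw [hr, div_lt_iff₀ hab] at h2
    unfold dyT
    have : p - a < ((⌊r⌋₊ : ℝ) + 1) * (b - a) / 2^n := by
      rw [lt_div_iff₀ h2n]
      nlinarith
    push_cast
    linarith

lemma sum_range_two_mul (f : ℕ → ℝ≥0∞) (m : ℕ) :
    ∑ j ∈ Finset.range (2*m), f j = ∑ k ∈ Finset.range m, (f (2*k) + f (2*k+1)) := by
  induction m with
  | zero => simp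
  | succ m ih =>
    rw [Nat.mul_succ, Finset.sum_range_succ, Finset.sum_range_succ, Finset.sum_range_succ, ih,
      ← add_assoc]

lemma sum_eVariationOn_le {E : Type*} [PseudoEMetricSpace E] (γ : ℝ → E) (w : ℕ → ℝ)
    (hw : Monotone w) (K : ℕ) :
    ∑ k ∈ Finset.range K, eVariationOn γ (Icc (w k) (w (k+1)))
      ≤ eVariationOn γ (Icc (w 0) (w K)) := by
  induction K with
  | zero => simp
  | succ K ih =>
    rw [Finset.sum_range_succ]
    have h1 : w 0 ≤ w K := hw (Nat.zero_le K)
    have h2 : w K ≤ w (K+1) := hw (Nat.le_succ K)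
    have heq := eVariationOn.Icc_add_Icc γ (s := Icc (w 0) (w (K+1))) h1 h2 ⟨h1, h2⟩
    rw [inter_eq_self_of_subset_right (Icc_subset_Icc le_rfl h2),
      inter_eq_self_of_subset_right (Icc_subset_Icc h1 le_rfl), inter_self] at heq
    calc ∑ k ∈ Finset.range K, eVariationOn γ (Icc (w k) (w (k+1)))
          + eVariationOn γ (Icc (w K) (w (K+1)))
        ≤ eVariationOn γ (Icc (w 0) (w K)) + eVariationOn γ (Icc (w K) (w (K+1))) :=
          add_le_add ih le_rfl
      _ = _ := heq

end DyadicAux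

/-- The multiplicity of the path `γ` (restricted to `I`) at the point `x`:
the number of preimages of `x` in `I`, as an extended nonnegative real. -/
noncomputable def pathMult {X : Type*} (γ : ℝ → X) (I : Set ℝ) (x : X) : ℝ≥0∞ :=
  ∑' _ : (γ ⁻¹' {x} ∩ I : Set ℝ), (1 : ℝ≥0∞)

theorem stmt15 {X : Type*} [MetricSpace X] [MeasurableSpace X] [BorelSpace X]
    (a b : ℝ) (hab : a ≤ b) (γ : ℝ → X) (hγ : ContinuousOn γ (Icc a b))
    (hfin : eVariationOn γ (Icc a b) < ⊤) :
    Measurable (pathMult γ (Icc a b)) ∧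
      eVariationOn γ (Icc a b) = ∫⁻ x, pathMult γ (Icc a b) x ∂μH[1] ∧
      ∀ᵐ x ∂(μH[1] : Measure X), pathMult γ (Icc a b) x < ⊤ := by
  have hmcount : ∀ x, pathMult γ (Icc a b) x = Measure.count (γ ⁻¹' {x} ∩ Icc a b) :=
    fun x => pathMult_eq_count' hγ x
  -- the dyadic approximations
  set g : ℕ → X → ℝ≥0∞ := fun n x => ∑ k ∈ Finset.range (2^n),
    (γ '' Ico (dyT a b n k) (dyT a b n (k+1))).indicator 1 x with hg
  have hJsub : ∀ n k, k < 2^n → Icc (dyT a b n k) (dyT a b n (k+1)) ⊆ Icc a b :=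
    fun n k hk => dyT_subset hab hk
  have hgmeas : ∀ n, Measurable (g n) := by
    intro n
    refine Finset.measurable_sum _ fun k hk => ?_
    exact measurable_one.indicator
      (measurableSet_image_Ico hγ (hJsub n k (Finset.mem_range.1 hk)))
  -- monotonicity of the dyadic approximations
  have hgmono : ∀ n, g n ≤ g (n+1) := by
    intro n x
    have hsplit : ∀ k : ℕ, Ico (dyT a b n k) (dyT a b n (k+1))
        = Ico (dyT a b (n+1) (2*k)) (dyT a b (n+1) (2*k+1))
          ∪ Ico (dyT a b (n+1) (2*k+1)) (dyT a b (n+1) (2*k+2)) := by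
      intro k
      rw [Ico_union_Ico_eq_Ico (dyT_mono hab (n+1) (Nat.le_succ (2*k)))
        (dyT_mono hab (n+1) (Nat.le_succ (2*k+1))), dyT_refine_left, dyT_refine_right]
    calc g n x ≤ ∑ k ∈ Finset.range (2^n),
          ((γ '' Ico (dyT a b (n+1) (2*k)) (dyT a b (n+1) (2*k+1))).indicator 1 x
            + (γ '' Ico (dyT a b (n+1) (2*k+1)) (dyT a b (n+1) (2*k+2))).indicator 1 x) := by
          refine Finset.sum_le_sum fun k _ => ?_
          by_cases hx : x ∈ γ '' Ico (dyT a b n k) (dyT a b n (k+1))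
          · rw [indicator_of_mem hx]
            rw [hsplit k, image_union] at hx
            rcases hx with h | h
            · rw [indicator_of_mem h]
              exact le_add_of_nonneg_right (zero_le)
            · rw [indicator_of_mem h]
              exact le_add_of_nonneg_left (zero_le)
          · rw [indicator_of_notMem hx]
            exact zero_le
      _ = g (n+1) x := by
          rw [hg]
          dsimp only
          rw [pow_succ, mul_comm (2^n) 2, sum_range_two_mul]
  -- pointwise supremum identification
  have hsup : ∀ x, (⨆ n, g n x) = Measure.count (γ ⁻¹' {x} ∩ Ico a b) := by
    intro x
    have hmeasJ : ∀ n k, k < 2^n →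
        MeasurableSet (γ ⁻¹' {x} ∩ Ico (dyT a b n k) (dyT a b n (k+1))) := by
      intro n k hk
      have h1 : IsClosed (Icc a b ∩ γ ⁻¹' {x}) :=
        hγ.preimage_isClosed_of_isClosed isClosed_Icc isClosed_singleton
      have heq : γ ⁻¹' {x} ∩ Ico (dyT a b n k) (dyT a b n (k+1))
          = (Icc a b ∩ γ ⁻¹' {x}) ∩ Ico (dyT a b n k) (dyT a b n (k+1)) := by
        ext p
        constructor
        · rintro ⟨hp1, hp2⟩
          exact ⟨⟨hJsub n k hk (Ico_subset_Icc_self hp2), hp1⟩, hp2⟩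
        · rintro ⟨⟨_, hp1⟩, hp2⟩
          exact ⟨hp1, hp2⟩
      rw [heq]
      exact (h1.measurableSet).inter measurableSet_Ico
    apply le_antisymm
    · refine iSup_le fun n => ?_
      have hdisjoint : (↑(Finset.range (2^n)) : Set ℕ).PairwiseDisjoint
          (fun k => γ ⁻¹' {x} ∩ Ico (dyT a b n k) (dyT a b n (k+1))) := by
        intro i _ j _ hij
        refine Disjoint.mono inter_subset_right inter_subset_right ?_
        rw [Set.Ico_disjoint_Ico]
        rcases lt_or_gt_of_ne hij with h | h
        · calc min (dyT a b n (i+1)) (dyT a b n (j+1)) ≤ dyT a b n (i+1) := min_le_left _ _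
            _ ≤ dyT a b n j := dyT_mono hab n h
            _ ≤ max (dyT a b n i) (dyT a b n j) := le_max_right _ _
        · calc min (dyT a b n (i+1)) (dyT a b n (j+1)) ≤ dyT a b n (j+1) := min_le_right _ _
            _ ≤ dyT a b n i := dyT_mono hab n h
            _ ≤ max (dyT a b n i) (dyT a b n j) := le_max_left _ _
      calc g n x ≤ ∑ k ∈ Finset.range (2^n),
            Measure.count (γ ⁻¹' {x} ∩ Ico (dyT a b n k) (dyT a b n (k+1))) := by
            refine Finset.sum_le_sum fun k _ => ?_
            by_cases hx : x ∈ γ '' Ico (dyT a b n k) (dyT a b n (k+1))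
            · obtain ⟨p, hp, hpx⟩ := hx
              rw [indicator_of_mem (show x ∈ γ '' Ico (dyT a b n k) (dyT a b n (k+1)) from ⟨p, hp, hpx⟩), Pi.one_apply]
              calc (1:ℝ≥0∞) = Measure.count ({p} : Set ℝ) := (Measure.count_singleton p).symm
                _ ≤ Measure.count (γ ⁻¹' {x} ∩ Ico (dyT a b n k) (dyT a b n (k+1))) :=
                    measure_mono (singleton_subset_iff.2 ⟨hpx, hp⟩)
            · rw [indicator_of_notMem hx]
              exact zero_le
        _ = Measure.count (⋃ k ∈ Finset.range (2^n),
              γ ⁻¹' {x} ∩ Ico (dyT a b n k) (dyT a b n (k+1))) :=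
            (measure_biUnion_finset hdisjoint
              (fun k hk => hmeasJ n k (Finset.mem_range.1 hk))).symm
        _ ≤ Measure.count (γ ⁻¹' {x} ∩ Ico a b) := by
            refine measure_mono ?_
            refine iUnion₂_subset fun k hk => ?_
            refine inter_subset_inter_right _ ?_
            refine Ico_subset_Ico ?_ ?_
            · conv_lhs => rw [← dyT_zero a b n]
              exact dyT_mono hab n (Nat.zero_le k)
            · conv_rhs => rw [← dyT_last a b n]
              exact dyT_mono hab n (Finset.mem_range.1 hk)
    · -- every finite subset of preimages is eventually separated
      have key : ∀ F : Finset ℝ, ↑F ⊆ γ ⁻¹' {x} ∩ Ico a b → (F.card : ℝ≥0∞) ≤ ⨆ n, g n x := by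
        intro F hF
        rcases F.eq_empty_or_nonempty with rfl | hFne
        · simp
        set D := F.offDiag with hD
        set δ : ℝ := if h : D.Nonempty then D.inf' h (fun q => |q.1 - q.2|) else 1 with hδdef
        have hδpos : 0 < δ := by
          rw [hδdef]
          split_ifs with h
          · rw [Finset.lt_inf'_iff]
            rintro ⟨q1, q2⟩ hq
            exact abs_pos.2 (sub_ne_zero.2 (Finset.mem_offDiag.1 hq).2.2)
          · exact one_pos
        have hδle : ∀ p ∈ F, ∀ q ∈ F, p ≠ q → δ ≤ |p - q| := by
          intro p hp q hq hpq
          have hDm : ((p, q) : ℝ × ℝ) ∈ D := Finset.mem_offDiag.2 ⟨hp, hq, hpq⟩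
          rw [hδdef, dif_pos ⟨_, hDm⟩]
          exact Finset.inf'_le _ hDm
        obtain ⟨n, hn⟩ := pow_unbounded_of_one_lt ((b - a)/δ) (one_lt_two (α := ℝ))
        have hmesh : (b - a) / 2^n < δ := by
          rw [div_lt_iff₀ (by positivity : (0:ℝ) < 2^n)]
          rw [div_lt_iff₀ hδpos] at hn
          linarith [hn]
        have hex : ∀ p ∈ F, ∃ k : ℕ, k < 2^n ∧ p ∈ Ico (dyT a b n k) (dyT a b n (k+1)) :=
          fun p hp => mem_dyT (hF hp).2 n
        set K : ℝ → ℕ := fun p =>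
          if h : ∃ k : ℕ, k < 2^n ∧ p ∈ Ico (dyT a b n k) (dyT a b n (k+1)) then h.choose
          else 0 with hK
        have hKspec : ∀ p ∈ F, K p < 2^n ∧ p ∈ Ico (dyT a b n (K p)) (dyT a b n (K p + 1)) := by
          intro p hp
          rw [hK]
          dsimp only
          rw [dif_pos (hex p hp)]
          exact (hex p hp).choose_spec
        have hinj : Set.InjOn K ↑F := by
          intro p hp q hq hpq
          by_contra hne
          have h1 := hKspec p hp
          have h2 := hKspec q hq
          rw [hpq] at h1
          have hlen := dyT_len a b n (K q)
          have habs : |p - q| < (b - a) / 2^n := by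
            rw [abs_sub_lt_iff]
            constructor
            · linarith [h1.2.1, h1.2.2, h2.2.1, h2.2.2]
            · linarith [h1.2.1, h1.2.2, h2.2.1, h2.2.2]
          exact absurd (hδle p hp q hq hne) (not_le.2 (habs.trans hmesh))
        refine le_trans ?_ (le_iSup _ n)
        have himg : F.image K ⊆ Finset.range (2^n) := by
          intro k hk
          obtain ⟨p, hp, rfl⟩ := Finset.mem_image.1 hk
          exact Finset.mem_range.2 (hKspec p hp).1
        calc (F.card : ℝ≥0∞) = ((F.image K).card : ℝ≥0∞) := by
              rw [Finset.card_image_of_injOn hinj]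
          _ = ∑ k ∈ F.image K, (1:ℝ≥0∞) := by simp
          _ ≤ ∑ k ∈ F.image K,
              (γ '' Ico (dyT a b n k) (dyT a b n (k+1))).indicator 1 x := by
              refine Finset.sum_le_sum fun k hk => ?_
              obtain ⟨p, hp, rfl⟩ := Finset.mem_image.1 hk
              rw [indicator_of_mem (show x ∈ γ '' Ico (dyT a b n (K p)) (dyT a b n (K p + 1)) from ⟨p, (hKspec p hp).2, (hF hp).1⟩), Pi.one_apply]
          _ ≤ g n x := Finset.sum_le_sum_of_subset himg
      rcases (γ ⁻¹' {x} ∩ Ico a b).finite_or_infinite with hfs | hfs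
      · rw [Measure.count_apply_finite _ hfs]
        exact_mod_cast key hfs.toFinset (by simp)
      · rw [Measure.count_apply_infinite hfs]
        have hN : ∀ N : ℕ, (N : ℝ≥0∞) ≤ ⨆ n, g n x := by
          intro N
          obtain ⟨F, hFsub, hFcard⟩ := hfs.exists_subset_card_eq N
          simpa [hFcard] using key F hFsub
        calc (⊤ : ℝ≥0∞) = ⨆ N : ℕ, (N : ℝ≥0∞) := ENNReal.iSup_natCast.symm
          _ ≤ ⨆ n, g n x := iSup_le hN
  -- decomposition of the multiplicity
  have hdecomp : ∀ x, pathMult γ (Icc a b) x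
      = Measure.count (γ ⁻¹' {x} ∩ Ico a b) + ({γ b} : Set X).indicator 1 x := by
    intro x
    rw [hmcount x]
    have hsplit : γ ⁻¹' {x} ∩ Icc a b = (γ ⁻¹' {x} ∩ Ico a b) ∪ (γ ⁻¹' {x} ∩ {b}) := by
      rw [← inter_union_distrib_left, Ico_union_right hab]
    have hdisj : Disjoint (γ ⁻¹' {x} ∩ Ico a b) (γ ⁻¹' {x} ∩ ({b} : Set ℝ)) := by
      refine Disjoint.mono inter_subset_right inter_subset_right ?_
      rw [disjoint_singleton_right]
      exact fun h => absurd h.2 (lt_irrefl b)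
    have hmeas2 : MeasurableSet (γ ⁻¹' {x} ∩ ({b} : Set ℝ)) :=
      (Set.Countable.mono inter_subset_right (countable_singleton b)).measurableSet
    rw [hsplit, measure_union hdisj hmeas2]
    congr 1
    by_cases hb : γ b = x
    · have h1 : γ ⁻¹' {x} ∩ ({b} : Set ℝ) = {b} :=
        inter_eq_self_of_subset_right (singleton_subset_iff.2 hb)
      rw [h1, Measure.count_singleton, indicator_of_mem (by simp [hb])]
      rfl
    · have h1 : γ ⁻¹' {x} ∩ ({b} : Set ℝ) = ∅ := by
        ext p
        simp only [mem_inter_iff, mem_preimage, mem_singleton_iff, mem_empty_iff_false,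
          iff_false, not_and]
        rintro hp rfl
        exact hb hp
      rw [h1, measure_empty, indicator_of_notMem (by simp only [mem_singleton_iff]; exact fun h => hb h.symm)]
  have hmeq : pathMult γ (Icc a b) = fun x => (⨆ n, g n x) + ({γ b} : Set X).indicator 1 x := by
    funext x
    rw [hdecomp x, hsup x]
  -- measurability
  have hmeas : Measurable (pathMult γ (Icc a b)) := by
    rw [hmeq]
    exact (Measurable.iSup hgmeas).add (measurable_one.indicator (measurableSet_singleton _))
  have hkey : eVariationOn γ (Icc a b) = ∫⁻ x, pathMult γ (Icc a b) x ∂μH[1] := by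
    refine le_antisymm ?_ ?_
    · -- lower bound : eVariationOn ≤ ∫ pathMult
      unfold eVariationOn
      refine iSup_le ?_
      rintro ⟨n, u, hu, hus⟩
      dsimp only
      have hsubI : ∀ i : ℕ, Icc (u i) (u (i+1)) ⊆ Icc a b :=
        fun i => Icc_subset_Icc (hus i).1 (hus (i+1)).2
      have hmeasI : ∀ i : ℕ, MeasurableSet (γ '' Icc (u i) (u (i+1))) :=
        fun i => (isCompact_Icc.image_of_continuousOn (hγ.mono (hsubI i))).measurableSet
      have hhmeas : Measurable fun x => ∑ j ∈ Finset.range n,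
          ({γ (u j)} : Set X).indicator (1 : X → ℝ≥0∞) x :=
        Finset.measurable_sum _ fun j _ =>
          measurable_one.indicator (measurableSet_singleton _)
      calc ∑ i ∈ Finset.range n, edist (γ (u (i+1))) (γ (u i))
          ≤ ∑ i ∈ Finset.range n, μH[1] (γ '' Icc (u i) (u (i+1))) := by
            refine Finset.sum_le_sum fun i _ => ?_
            have hconn : IsPreconnected (γ '' Icc (u i) (u (i+1))) :=
              isPreconnected_Icc.image γ (hγ.mono (hsubI i))
            exact edist_le_h1 hconn ⟨u (i+1), ⟨hu (Nat.le_succ i), le_rfl⟩, rfl⟩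
              ⟨u i, ⟨le_rfl, hu (Nat.le_succ i)⟩, rfl⟩
        _ = ∫⁻ x, ∑ i ∈ Finset.range n,
              (γ '' Icc (u i) (u (i+1))).indicator 1 x ∂μH[1] := by
            rw [lintegral_finset_sum _ fun i _ => measurable_one.indicator (hmeasI i)]
            refine Finset.sum_congr rfl fun i _ => ?_
            rw [lintegral_indicator_one (hmeasI i)]
        _ ≤ ∫⁻ x, (pathMult γ (Icc a b) x + ∑ j ∈ Finset.range n,
              ({γ (u j)} : Set X).indicator 1 x) ∂μH[1] := by
            refine lintegral_mono fun x => ?_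
            refine (count_claim u hu x n).trans (add_le_add ?_ le_rfl)
            rw [hmcount x]
            exact measure_mono (inter_subset_inter_right _
              (Icc_subset_Icc (hus 0).1 (hus n).2))
        _ = ∫⁻ x, pathMult γ (Icc a b) x ∂μH[1] + ∫⁻ x, ∑ j ∈ Finset.range n,
              ({γ (u j)} : Set X).indicator 1 x ∂μH[1] :=
            lintegral_add_right _ hhmeas
        _ = ∫⁻ x, pathMult γ (Icc a b) x ∂μH[1] := by
            have hz : ∫⁻ x, ∑ j ∈ Finset.range n,
                ({γ (u j)} : Set X).indicator (1 : X → ℝ≥0∞) x ∂μH[1] = 0 := by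
              rw [lintegral_finset_sum _ fun j _ =>
                measurable_one.indicator (measurableSet_singleton _)]
              refine Finset.sum_eq_zero fun j _ => ?_
              rw [lintegral_indicator_one (measurableSet_singleton _), h1_singleton]
            rw [hz, add_zero]
    · -- upper bound : ∫ pathMult ≤ eVariationOn
      have hint : ∫⁻ x, pathMult γ (Icc a b) x ∂μH[1] = ⨆ n, ∫⁻ x, g n x ∂μH[1] := by
        calc ∫⁻ x, pathMult γ (Icc a b) x ∂μH[1]
            = ∫⁻ x, ((⨆ n, g n x) + ({γ b} : Set X).indicator 1 x) ∂μH[1] := by rw [hmeq]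
          _ = ∫⁻ x, (⨆ n, g n x) ∂μH[1] + ∫⁻ x, ({γ b} : Set X).indicator 1 x ∂μH[1] :=
              lintegral_add_right _ (measurable_one.indicator (measurableSet_singleton _))
          _ = ∫⁻ x, (⨆ n, g n x) ∂μH[1] := by
              rw [lintegral_indicator_one (measurableSet_singleton _), h1_singleton, add_zero]
          _ = ⨆ n, ∫⁻ x, g n x ∂μH[1] :=
              lintegral_iSup hgmeas (monotone_nat_of_le_succ hgmono)
      rw [hint]
      refine iSup_le fun n => ?_
      have hintg : ∫⁻ x, g n x ∂μH[1] = ∑ k ∈ Finset.range (2^n),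
          μH[1] (γ '' Ico (dyT a b n k) (dyT a b n (k+1))) := by
        rw [hg]
        dsimp only
        rw [lintegral_finset_sum _ fun k hk => measurable_one.indicator
          (measurableSet_image_Ico hγ (hJsub n k (Finset.mem_range.1 hk)))]
        refine Finset.sum_congr rfl fun k hk => ?_
        rw [lintegral_indicator_one
          (measurableSet_image_Ico hγ (hJsub n k (Finset.mem_range.1 hk)))]
      rw [hintg]
      calc ∑ k ∈ Finset.range (2^n), μH[1] (γ '' Ico (dyT a b n k) (dyT a b n (k+1)))
          ≤ ∑ k ∈ Finset.range (2^n), eVariationOn γ (Icc (dyT a b n k) (dyT a b n (k+1))) := by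
            refine Finset.sum_le_sum fun k hk => ?_
            have hfin' : eVariationOn γ (Icc (dyT a b n k) (dyT a b n (k+1))) ≠ ⊤ := by
              refine fun h => hfin.ne (top_le_iff.1 (h ▸ ?_))
              exact eVariationOn.mono γ (hJsub n k (Finset.mem_range.1 hk))
            refine le_trans (measure_mono (image_mono Ico_subset_Icc_self)) ?_
            exact h1_image_le (dyT_mono hab n (Nat.le_succ k)) hfin'
        _ ≤ eVariationOn γ (Icc (dyT a b n 0) (dyT a b n (2^n))) :=
            sum_eVariationOn_le γ (dyT a b n) (dyT_mono hab n) (2^n)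
        _ = eVariationOn γ (Icc a b) := by rw [dyT_zero, dyT_last]
  exact ⟨hmeas, hkey, ae_lt_top hmeas (hkey ▸ hfin.ne)⟩
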